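/- arXiv:2304.00809 — 6 statements merged into one kernel-verified Lean document; each statement's English description precedes it below -/
import Mathlib

section
/- Let X_1,...,X_n, Y be i.i.d. random variables valued in X, let X = (X_1,...,X_n) and X' = (Y, X_2,...,X_n), and let A ⊆ X^n be a measurable set invariant under permutations of coordinates. Then P(X ∈ A and X' ∉ A) ≤ P(X ∈ A) · P(X ∉ A). -/
open MeasureTheory ENNReal

theorem stmt_3 {X : Type*} [MeasurableSpace X] (μ : Measure X) [IsProbabilityMeasure μ]
    (n : ℕ) (hn : 0 < n) (A : Set (Fin n → X)) (hA : MeasurableSet A)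
    (hperm : ∀ σ : Equiv.Perm (Fin n), ∀ x : Fin n → X, x ∈ A ↔ (x ∘ σ) ∈ A) :
    ((Measure.pi fun _ : Fin n => μ).prod μ)
        {p : (Fin n → X) × X | p.1 ∈ A ∧ Function.update p.1 ⟨0, hn⟩ p.2 ∉ A} ≤
      (Measure.pi fun _ : Fin n => μ) A * (Measure.pi fun _ : Fin n => μ) Aᶜ := by
  clear hperm
  obtain _ | m := n
  · exact absurd hn (lt_irrefl 0)
  set ν : Measure (Fin (m + 1) → X) := Measure.pi fun _ => μ with hνdef
  set ν' : Measure (Fin m → X) := Measure.pi fun _ => μ with hν'def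
  set e := MeasurableEquiv.piFinSuccAbove (fun _ : Fin (m + 1) => X) 0 with hedef
  have hpe : MeasurePreserving e ν (μ.prod ν') :=
    measurePreserving_piFinSuccAbove (fun _ => μ) 0
  set B : Set (X × (Fin m → X)) := e.symm ⁻¹' A with hBdef
  have hBm : MeasurableSet B := e.symm.measurable hA
  set g : (Fin m → X) → ℝ≥0∞ := fun z => μ ((fun y => (y, z)) ⁻¹' B) with hgdef
  have hgm : Measurable g := measurable_measure_prodMk_right hBm
  have hg1 : ∀ z, g z ≤ 1 := fun z => prob_le_one
  -- membership facts
  have hAB : ∀ x, x ∈ A ↔ e x ∈ B := by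
    intro x; rw [hBdef]; simp
  have heupd : ∀ (x : Fin (m + 1) → X) (y : X),
      e (Function.update x ⟨0, hn⟩ y) = (y, (e x).2) := by
    intro x y
    have h0 : (⟨0, hn⟩ : Fin (m + 1)) = 0 := rfl
    rw [h0]
    refine Prod.ext ?_ ?_
    · simp [hedef, MeasurableEquiv.piFinSuccAbove, Fin.insertNthEquiv, Fin.removeNth]
    · funext j
      simp [hedef, MeasurableEquiv.piFinSuccAbove, Fin.insertNthEquiv, Fin.removeNth,
        Function.update_of_ne (Fin.succAbove_ne 0 j)]
  -- the section measure
  have hsec : ∀ z : Fin m → X, μ {y | (y, z) ∉ B} = 1 - g z := by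
    intro z
    have : {y | (y, z) ∉ B} = ((fun y => (y, z)) ⁻¹' B)ᶜ := rfl
    rw [this, prob_compl_eq_one_sub (measurable_prodMk_right hBm)]
  -- LHS computation
  have hT : MeasurableSet {q : (X × (Fin m → X)) × X | q.1 ∈ B ∧ (q.2, q.1.2) ∉ B} := by
    refine (measurable_fst hBm).inter ?_
    exact ((measurable_snd.prodMk (measurable_snd.comp measurable_fst)) hBm).compl
  have hLHS : (ν.prod μ) {p : (Fin (m + 1) → X) × X |
        p.1 ∈ A ∧ Function.update p.1 ⟨0, hn⟩ p.2 ∉ A} =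
      ∫⁻ z, g z * (1 - g z) ∂ν' := by
    have hmp : MeasurePreserving (fun p : (Fin (m + 1) → X) × X => (e p.1, p.2))
        (ν.prod μ) ((μ.prod ν').prod μ) := hpe.prod (MeasurePreserving.id μ)
    have hset : {p : (Fin (m + 1) → X) × X | p.1 ∈ A ∧ Function.update p.1 ⟨0, hn⟩ p.2 ∉ A} =
        (fun p : (Fin (m + 1) → X) × X => (e p.1, p.2)) ⁻¹'
          {q : (X × (Fin m → X)) × X | q.1 ∈ B ∧ (q.2, q.1.2) ∉ B} := by
      ext p
      simp only [Set.mem_setOf_eq, Set.mem_preimage]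
      rw [hAB p.1, hAB, heupd]
    rw [hset, hmp.measure_preimage hT.nullMeasurableSet]
    rw [Measure.prod_apply hT]
    have h1 : ∀ q : X × (Fin m → X),
        μ (Prod.mk q ⁻¹' {q : (X × (Fin m → X)) × X | q.1 ∈ B ∧ (q.2, q.1.2) ∉ B}) =
          B.indicator (fun q => 1 - g q.2) q := by
      intro q
      by_cases hq : q ∈ B
      · rw [Set.indicator_of_mem hq, ← hsec q.2]
        congr 1
        ext y
        simp [hq]
      · rw [Set.indicator_of_notMem hq]
        have : Prod.mk q ⁻¹' {q : (X × (Fin m → X)) × X | q.1 ∈ B ∧ (q.2, q.1.2) ∉ B} = ∅ := by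
          ext y; simp [hq]
        rw [this, measure_empty]
    simp_rw [h1]
    have hmeas : Measurable fun q : X × (Fin m → X) => B.indicator (fun q => 1 - g q.2) q := by
      exact (measurable_const.sub (hgm.comp measurable_snd)).indicator hBm
    rw [lintegral_prod_symm' _ hmeas]
    congr 1
    funext z
    have h3 : ∀ y : X, B.indicator (fun q : X × (Fin m → X) => 1 - g q.2) (y, z) =
        ((fun y => (y, z)) ⁻¹' B).indicator (fun _ => 1 - g z) y := by
      intro y
      by_cases hy : (y, z) ∈ B <;> simp [Set.indicator, hy]
    simp_rw [h3]
    rw [lintegral_indicator_const (measurable_prodMk_right hBm)]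
    rw [mul_comm]
  -- RHS computation
  have hνA : ν A = ∫⁻ z, g z ∂ν' := by
    have h1 : A = e ⁻¹' B := by
      ext x; exact hAB x
    rw [h1, hpe.measure_preimage hBm.nullMeasurableSet, Measure.prod_apply_symm hBm]
  have hνAc : ν Aᶜ = 1 - ∫⁻ z, g z ∂ν' := by
    rw [prob_compl_eq_one_sub hA, hνA]
  set a : ℝ≥0∞ := ∫⁻ z, g z ∂ν' with hadef
  set b : ℝ≥0∞ := ∫⁻ z, g z * g z ∂ν' with hbdef
  have ha1 : a ≤ 1 := by
    rw [hadef]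
    calc ∫⁻ z, g z ∂ν' ≤ ∫⁻ _, 1 ∂ν' := lintegral_mono hg1
    _ = 1 := by simp
  have hba : b ≤ a := by
    refine lintegral_mono fun z => ?_
    calc g z * g z ≤ 1 * g z := mul_le_mul_left (hg1 z) _
    _ = g z := one_mul _
  have hbne : b ≠ ⊤ := (hba.trans ha1).trans_lt (by norm_num) |>.ne
  -- Cauchy-Schwarz: a * a ≤ b
  have hCS : a * a ≤ b := by
    have h22 : (2 : ℝ).HolderConjugate 2 := Real.HolderConjugate.two_two
    have := ENNReal.lintegral_mul_le_Lp_mul_Lq ν' h22 hgm.aemeasurable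
      (aemeasurable_const : AEMeasurable (fun _ => (1 : ℝ≥0∞)) ν')
    simp only [Pi.mul_apply, mul_one, ENNReal.one_rpow, lintegral_const, measure_univ,
      ENNReal.one_rpow, one_mul] at this
    have hsq : ∀ z, g z ^ (2 : ℝ) = g z * g z := by
      intro z
      rw [show (2 : ℝ) = ((2 : ℕ) : ℝ) by norm_num, ENNReal.rpow_natCast, sq]
    simp_rw [hsq] at this
    -- this : a ≤ b ^ (1/2)
    calc a * a ≤ b ^ (1 / 2 : ℝ) * b ^ (1 / 2 : ℝ) := mul_le_mul' this this
    _ = (b ^ (1 / 2 : ℝ)) ^ (2 : ℕ) := (sq _).symm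
    _ = (b ^ (1 / 2 : ℝ)) ^ ((2 : ℕ) : ℝ) := (ENNReal.rpow_natCast _ 2).symm
    _ = b ^ ((1 / 2 : ℝ) * 2) := (ENNReal.rpow_mul b _ _).symm
    _ = b := by norm_num
  -- put together
  rw [hLHS, hνA, hνAc]
  have hptwise : ∀ z, g z * (1 - g z) = g z - g z * g z := by
    intro z
    rw [ENNReal.mul_sub (fun _ _ => (hg1 z).trans_lt (by norm_num) |>.ne), mul_one]
  have hint : ∫⁻ z, g z * (1 - g z) ∂ν' = a - b := by
    simp_rw [hptwise]
    rw [hadef, hbdef]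
    exact lintegral_sub (hgm.mul hgm) hbne (Filter.Eventually.of_forall fun z => by
      calc g z * g z ≤ 1 * g z := mul_le_mul_left (hg1 z) _
      _ = g z := one_mul _)
  rw [hint]
  have hrhs : a * (1 - a) = a - a * a := by
    rw [ENNReal.mul_sub (fun _ _ => ha1.trans_lt (by norm_num) |>.ne), mul_one]
  rw [hrhs]
  exact tsub_le_tsub_left hCS a
end

section
/- Suppose the risk J satisfies the error bound τ·ϑ(φ, S)^β ≤ J(φ) − J_* for all φ in the sublevel set [J ≤ J₀], where S = argmin J and J_* = min J. If φ̂ minimizes the empirical risk Ĵ = f̂ + R (with J = f + R), J(φ̂) ≤ J₀, and the quadruple inequality l(φ,x) − l(ψ,x) − l(φ,y) + l(ψ,y) ≤ a(x,y)·ϑ(φ,ψ)^α holds, then τ·ϑ(φ̂, S)^{β−α} ≤ (1/n) Σᵢ E_Y[a(Y, Xᵢ)]. -/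
open MeasureTheory Metric Filter

theorem stmt_7 {M 𝕏 : Type*} [MetricSpace M] [MeasurableSpace 𝕏]
    (μ : Measure 𝕏) [IsProbabilityMeasure μ]
    (l : M → 𝕏 → ℝ) (hl : ∀ φ, Integrable (l φ) μ)
    (R : M → ℝ) (n : ℕ) (hn : 0 < n) (x : Fin n → 𝕏)
    (α β τ J₀ : ℝ) (hα : 0 < α) (hαβ : α < β) (hτ : 0 < τ)
    (a : 𝕏 → 𝕏 → ℝ) (hanneg : ∀ y z, 0 ≤ a y z)
    (ha : ∀ i, Integrable (fun y => a y (x i)) μ)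
    (S : Set M)
    (hS : S = {φ | ∀ ψ, (∫ z, l φ z ∂μ) + R φ ≤ (∫ z, l ψ z ∂μ) + R ψ})
    (φstar : M) (hφstar : φstar ∈ S)
    (herr : ∀ φ : M, (∫ z, l φ z ∂μ) + R φ ≤ J₀ →
      τ * infDist φ S ^ β ≤ ((∫ z, l φ z ∂μ) + R φ) - ((∫ z, l φstar z ∂μ) + R φstar))
    (φhat : M)
    (hmin : ∀ ψ, ((1 : ℝ) / n) * ∑ i, l φhat (x i) + R φhat ≤
      ((1 : ℝ) / n) * ∑ i, l ψ (x i) + R ψ)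
    (hlevel : (∫ z, l φhat z ∂μ) + R φhat ≤ J₀)
    (hquad : ∀ φ ψ : M, ∀ y z : 𝕏,
      l φ y - l ψ y - l φ z + l ψ z ≤ a y z * dist φ ψ ^ α) :
    τ * infDist φhat S ^ (β - α) ≤ ((1 : ℝ) / n) * ∑ i, ∫ y, a y (x i) ∂μ := by
  set F : M → ℝ := fun φ => ∫ z, l φ z ∂μ with hF
  set A : ℝ := ((1:ℝ)/n) * ∑ i, ∫ y, a y (x i) ∂μ with hA
  have hn' : (n:ℝ) ≠ 0 := Nat.cast_ne_zero.mpr hn.ne'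
  have hninv : (0:ℝ) ≤ 1 / n := by positivity
  have hA0 : 0 ≤ A := by
    apply mul_nonneg hninv
    exact Finset.sum_nonneg fun i _ => integral_nonneg fun y => hanneg y (x i)
  set D := infDist φhat S with hD
  have hD0 : 0 ≤ D := infDist_nonneg
  have key : ∀ ψ ∈ S, τ * D ^ β ≤ A * dist φhat ψ ^ α := by
    intro ψ hψ
    have hψle : F ψ + R ψ ≤ F φstar + R φstar := by
      rw [hS] at hψ; exact hψ φstar
    have h1 : τ * D ^ β ≤ (F φhat + R φhat) - (F ψ + R ψ) := by
      have := herr φhat hlevel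
      simp only [hF] at this hψle ⊢
      linarith
    have h2 : (F φhat + R φhat) - (F ψ + R ψ) ≤
        (F φhat - F ψ) - (((1:ℝ)/n) * ∑ i, l φhat (x i) - ((1:ℝ)/n) * ∑ i, l ψ (x i)) := by
      have := hmin ψ; linarith
    have h3 : ∀ i : Fin n,
        F φhat - F ψ - l φhat (x i) + l ψ (x i)
          ≤ (∫ y, a y (x i) ∂μ) * dist φhat ψ ^ α := by
      intro i
      have hI1 : Integrable (fun y => l φhat y - l ψ y) μ := (hl φhat).sub (hl ψ)
      have hI2 : Integrable (fun y => l φhat y - l ψ y - l φhat (x i)) μ :=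
        hI1.sub (integrable_const _)
      have hI3 : Integrable (fun y => l φhat y - l ψ y - l φhat (x i) + l ψ (x i)) μ :=
        hI2.add (integrable_const _)
      calc F φhat - F ψ - l φhat (x i) + l ψ (x i)
          = ∫ y, (l φhat y - l ψ y - l φhat (x i) + l ψ (x i)) ∂μ := by
            rw [integral_add hI2 (integrable_const _), integral_sub hI1 (integrable_const _),
                integral_sub (hl φhat) (hl ψ), integral_const, integral_const]
            simp [hF]
        _ ≤ ∫ y, a y (x i) * dist φhat ψ ^ α ∂μ := by
            refine integral_mono hI3 ((ha i).mul_const _) fun y => ?_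
            exact hquad φhat ψ y (x i)
        _ = (∫ y, a y (x i) ∂μ) * dist φhat ψ ^ α := integral_mul_const _ _
    have h4 : ∑ i : Fin n, (F φhat - F ψ - l φhat (x i) + l ψ (x i))
        ≤ ∑ i : Fin n, (∫ y, a y (x i) ∂μ) * dist φhat ψ ^ α :=
      Finset.sum_le_sum fun i _ => h3 i
    have hsumL : ∑ i : Fin n, (F φhat - F ψ - l φhat (x i) + l ψ (x i))
        = (n : ℝ) * (F φhat - F ψ) - ∑ i, l φhat (x i) + ∑ i, l ψ (x i) := by
      rw [Finset.sum_add_distrib, Finset.sum_sub_distrib, Finset.sum_const]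
      simp [mul_comm]
    have hsumR : ∑ i : Fin n, (∫ y, a y (x i) ∂μ) * dist φhat ψ ^ α
        = (∑ i, ∫ y, a y (x i) ∂μ) * dist φhat ψ ^ α := by
      rw [Finset.sum_mul]
    have h5 : F φhat - F ψ - (((1:ℝ)/n) * ∑ i, l φhat (x i)
        - ((1:ℝ)/n) * ∑ i, l ψ (x i)) ≤ A * dist φhat ψ ^ α := by
      have h6 := mul_le_mul_of_nonneg_left h4 hninv
      rw [hsumL, hsumR] at h6
      calc F φhat - F ψ - (((1:ℝ)/n) * ∑ i, l φhat (x i) - ((1:ℝ)/n) * ∑ i, l ψ (x i))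
          = (1/n) * ((n : ℝ) * (F φhat - F ψ) - ∑ i, l φhat (x i) + ∑ i, l ψ (x i)) := by
            field_simp
            ring
        _ ≤ (1/n) * ((∑ i, ∫ y, a y (x i) ∂μ) * dist φhat ψ ^ α) := h6
        _ = A * dist φhat ψ ^ α := by rw [hA]; ring
    linarith
  have hSne : S.Nonempty := ⟨φstar, hφstar⟩
  have step : ∀ c, D < c → τ * D ^ β ≤ A * c ^ α := by
    intro c hc
    obtain ⟨ψ, hψS, hψd⟩ := (infDist_lt_iff hSne).mp hc
    calc τ * D ^ β ≤ A * dist φhat ψ ^ α := key ψ hψS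
      _ ≤ A * c ^ α :=
        mul_le_mul_of_nonneg_left (Real.rpow_le_rpow dist_nonneg hψd.le hα.le) hA0
  have hcont : Tendsto (fun c : ℝ => A * c ^ α) (nhdsWithin D (Set.Ioi D)) (nhds (A * D ^ α)) :=
    (continuousAt_const.mul (Real.continuousAt_rpow_const D α (Or.inr hα.le))).tendsto.mono_left
      nhdsWithin_le_nhds
  have hmain : τ * D ^ β ≤ A * D ^ α :=
    ge_of_tendsto hcont (eventually_nhdsWithin_of_forall fun c hc => step c hc)
  rcases eq_or_lt_of_le hD0 with h0 | h0
  · rw [← h0, Real.zero_rpow (sub_pos.mpr hαβ).ne', mul_zero]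
    exact hA0
  · have hpos := Real.rpow_pos_of_pos h0 α
    have hmul : τ * D ^ (β - α) * D ^ α ≤ A * D ^ α := by
      rw [mul_assoc, ← Real.rpow_add h0, sub_add_cancel]
      exact hmain
    exact le_of_mul_le_mul_right hmul hpos
end

section
/- Let A = Cov(ν) be the covariance matrix of ν on R^d with eigenvalues λ1 ≥ ... ≥ λd and top eigenvector set S = {±u1}. Then for every ψ ∈ S^{d−1}, (4/π²)(λ1 − λ2)·ϑ(ψ, S)² ≤ J(ψ) − J_*, where J(ψ) = −⟨Aψ, ψ⟩, J_* = −λ1, and ϑ(ψ, S) = arccos|⟨ψ, u1⟩|. -/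
open Matrix Finset

theorem jordan_sq {x : ℝ} (hx : |x| ≤ 1) :
    (4 / Real.pi ^ 2) * Real.arccos |x| ^ 2 ≤ 1 - x ^ 2 := by
  have hπ : 0 < Real.pi := Real.pi_pos
  have h0 : 0 ≤ Real.arccos |x| := Real.arccos_nonneg _
  have h2 : Real.arccos |x| ≤ Real.pi / 2 :=
    Real.arccos_le_pi_div_two.mpr (abs_nonneg x)
  have hj := Real.mul_le_sin h0 h2
  rw [Real.sin_arccos, sq_abs] at hj
  have hnn : (0:ℝ) ≤ 2 / Real.pi * Real.arccos |x| := by positivity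
  have hsq := mul_self_le_mul_self hnn hj
  have h1x : 0 ≤ 1 - x ^ 2 := by nlinarith [sq_abs x, abs_nonneg x]
  rw [Real.mul_self_sqrt h1x] at hsq
  have heq : 2 / Real.pi * Real.arccos |x| * (2 / Real.pi * Real.arccos |x|)
      = 4 / Real.pi ^ 2 * Real.arccos |x| ^ 2 := by
    field_simp
    ring
  linarith [heq ▸ hsq]

theorem dot_sum (d : ℕ) (v : Fin d → ℝ) (f : Fin d → Fin d → ℝ) :
    v ⬝ᵥ (∑ i, f i) = ∑ i, v ⬝ᵥ f i := by
  simp only [dotProduct, Finset.sum_apply, Finset.mul_sum]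
  exact Finset.sum_comm

theorem aux_main (d : ℕ) (A : Matrix (Fin d) (Fin d) ℝ)
    (u : Fin d → Fin d → ℝ) (lam : Fin d → ℝ)
    (hortho : ∀ i j, u i ⬝ᵥ u j = if i = j then (1 : ℝ) else 0)
    (heig : ∀ i, A.mulVec (u i) = lam i • u i)
    (hmono : Antitone lam)
    (ψ : Fin d → ℝ) (hψ : ψ ⬝ᵥ ψ = 1)
    (i0 i1 : Fin d) (h0 : (i0 : ℕ) = 0) (h1 : (i1 : ℕ) = 1) :
    (4 / Real.pi ^ 2) * (lam i0 - lam i1) * Real.arccos |u i0 ⬝ᵥ ψ| ^ 2 ≤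
      lam i0 - ψ ⬝ᵥ A.mulVec ψ := by
  classical
  set c : Fin d → ℝ := fun i => u i ⬝ᵥ ψ with hc
  set U : Matrix (Fin d) (Fin d) ℝ := Matrix.of u with hU
  have hUUT : U * Uᵀ = 1 := by
    ext i j
    simpa [Matrix.mul_apply, Matrix.one_apply, dotProduct, hU] using hortho i j
  have hUTU : Uᵀ * U = 1 := mul_eq_one_comm.mp hUUT
  have hUc : U.mulVec ψ = c := by
    funext i
    simp [Matrix.mulVec, dotProduct, hc, hU]
  have hspan : ψ = ∑ i, c i • u i := by
    have h2 : Uᵀ.mulVec c = ψ := by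
      rw [← hUc, Matrix.mulVec_mulVec, hUTU, Matrix.one_mulVec]
    funext k
    rw [← h2]
    simp only [Matrix.mulVec, dotProduct, Matrix.transpose_apply, hU, Matrix.of_apply,
      Finset.sum_apply, Pi.smul_apply, smul_eq_mul]
    exact Finset.sum_congr rfl fun i _ => mul_comm _ _
  have hψu : ∀ i, ψ ⬝ᵥ u i = c i := fun i => by
    rw [dotProduct_comm]
  have hsum : ∑ i, c i ^ 2 = 1 := by
    have h : ψ ⬝ᵥ ψ = ∑ i, c i ^ 2 := by
      conv_lhs => rw [show (ψ ⬝ᵥ ψ) = ψ ⬝ᵥ (∑ i, c i • u i) by rw [← hspan]]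
      rw [dot_sum]
      refine Finset.sum_congr rfl fun i _ => ?_
      rw [dotProduct_smul, smul_eq_mul, hψu, sq]
    rw [← h, hψ]
  have hAψ : A.mulVec ψ = ∑ i, c i • (lam i • u i) := by
    conv_lhs => rw [hspan, ← Matrix.mulVecLin_apply, map_sum]
    refine Finset.sum_congr rfl fun i _ => ?_
    rw [_root_.map_smul, Matrix.mulVecLin_apply, heig]
  have hquad : ψ ⬝ᵥ A.mulVec ψ = ∑ i, lam i * c i ^ 2 := by
    rw [hAψ, dot_sum]
    refine Finset.sum_congr rfl fun i _ => ?_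
    rw [dotProduct_smul, dotProduct_smul, smul_eq_mul, smul_eq_mul, hψu]
    ring
  have hkey : lam i0 - ψ ⬝ᵥ A.mulVec ψ = ∑ i, (lam i0 - lam i) * c i ^ 2 := by
    rw [hquad]
    have : ∑ i, (lam i0 - lam i) * c i ^ 2
        = ∑ i, lam i0 * c i ^ 2 - ∑ i, lam i * c i ^ 2 := by
      rw [← Finset.sum_sub_distrib]
      exact Finset.sum_congr rfl fun i _ => by ring
    rw [this, ← Finset.mul_sum, hsum, mul_one]
  have h01 : i0 ≤ i1 := by
    rw [Fin.le_def, h0, h1]; omega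
  have hlam : 0 ≤ lam i0 - lam i1 := sub_nonneg.mpr (hmono h01)
  have hsq0 : c i0 ^ 2 ≤ 1 := by
    rw [← hsum]
    exact Finset.single_le_sum (fun i _ => sq_nonneg (c i)) (Finset.mem_univ i0)
  have habs1 : |c i0| ≤ 1 := by
    nlinarith [sq_abs (c i0), abs_nonneg (c i0)]
  have hstep : (lam i0 - lam i1) * (1 - c i0 ^ 2) ≤ ∑ i, (lam i0 - lam i) * c i ^ 2 := by
    have herase : ∑ i, (lam i0 - lam i) * c i ^ 2
        = ∑ i ∈ Finset.univ.erase i0, (lam i0 - lam i) * c i ^ 2 := by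
      rw [Finset.sum_erase _ (by ring)]
    have h1c : 1 - c i0 ^ 2 = ∑ i ∈ Finset.univ.erase i0, c i ^ 2 := by
      rw [← hsum, Finset.sum_erase_eq_sub (Finset.mem_univ i0)]
    rw [herase, h1c, Finset.mul_sum]
    refine Finset.sum_le_sum fun i hi => ?_
    have hine : i1 ≤ i := by
      have := Finset.ne_of_mem_erase hi
      rw [Fin.le_def, h1]
      have : (i : ℕ) ≠ 0 := fun h => (Finset.ne_of_mem_erase hi) (Fin.ext (h.trans h0.symm))
      omega
    have := hmono hine
    nlinarith [sq_nonneg (c i)]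
  calc (4 / Real.pi ^ 2) * (lam i0 - lam i1) * Real.arccos |u i0 ⬝ᵥ ψ| ^ 2
      = (lam i0 - lam i1) * ((4 / Real.pi ^ 2) * Real.arccos |c i0| ^ 2) := by
        rw [hc]; ring
    _ ≤ (lam i0 - lam i1) * (1 - c i0 ^ 2) :=
        mul_le_mul_of_nonneg_left (jordan_sq habs1) hlam
    _ ≤ ∑ i, (lam i0 - lam i) * c i ^ 2 := hstep
    _ = lam i0 - ψ ⬝ᵥ A.mulVec ψ := hkey.symm

theorem stmt_10 (d : ℕ) (hd : 2 ≤ d) (A : Matrix (Fin d) (Fin d) ℝ) (hA : A.IsSymm)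
    (u : Fin d → Fin d → ℝ) (lam : Fin d → ℝ)
    (hortho : ∀ i j, u i ⬝ᵥ u j = if i = j then (1 : ℝ) else 0)
    (heig : ∀ i, A.mulVec (u i) = lam i • u i)
    (hmono : Antitone lam) (hpsd : ∀ i, 0 ≤ lam i)
    (ψ : Fin d → ℝ) (hψ : ψ ⬝ᵥ ψ = 1) :
    (4 / Real.pi ^ 2) * (lam ⟨0, by omega⟩ - lam ⟨1, by omega⟩) *
        Real.arccos |u ⟨0, by omega⟩ ⬝ᵥ ψ| ^ 2 ≤
      lam ⟨0, by omega⟩ - ψ ⬝ᵥ A.mulVec ψ := by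
  exact aux_main d A u lam hortho heig hmono ψ hψ _ _ rfl rfl
end

section
/- For the eigenvector cost l(φ, (y,z)) = ⟨y,φ⟩² − ⟨y,φ⟩⟨z,φ⟩ on the unit sphere, the quadruple inequality holds: for all unit vectors φ, ψ and all (y,z), (y',z') ∈ R^d × R^d, l(φ,(y,z)) − l(ψ,(y,z)) − l(φ,(y',z')) + l(ψ,(y',z')) ≤ 2(‖y‖² + ‖y'‖² + ‖y‖‖z‖ + ‖y'‖‖z'‖) · arccos⟨φ,ψ⟩. -/
open scoped RealInnerProductSpace

lemma aux_lip (d : ℕ) (φ ψ y z : EuclideanSpace ℝ (Fin d))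
    (hφ : ‖φ‖ = 1) (hψ : ‖ψ‖ = 1) :
    (⟪y, φ⟫ ^ 2 - ⟪y, φ⟫ * ⟪z, φ⟫) - (⟪y, ψ⟫ ^ 2 - ⟪y, ψ⟫ * ⟪z, ψ⟫) ≤
      (2 * ‖y‖ ^ 2 + 2 * ‖y‖ * ‖z‖) * ‖φ - ψ‖ := by
  have ha : |⟪y, φ⟫| ≤ ‖y‖ := by
    calc |⟪y, φ⟫| ≤ ‖y‖ * ‖φ‖ := abs_real_inner_le_norm y φ
    _ = ‖y‖ := by rw [hφ, mul_one]
  have hb : |⟪y, ψ⟫| ≤ ‖y‖ := by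
    calc |⟪y, ψ⟫| ≤ ‖y‖ * ‖ψ‖ := abs_real_inner_le_norm y ψ
    _ = ‖y‖ := by rw [hψ, mul_one]
  have hc : |⟪z, φ⟫| ≤ ‖z‖ := by
    calc |⟪z, φ⟫| ≤ ‖z‖ * ‖φ‖ := abs_real_inner_le_norm z φ
    _ = ‖z‖ := by rw [hφ, mul_one]
  have hab : ⟪y, φ⟫ - ⟪y, ψ⟫ = ⟪y, φ - ψ⟫ := by rw [inner_sub_right]
  have hce : ⟪z, φ⟫ - ⟪z, ψ⟫ = ⟪z, φ - ψ⟫ := by rw [inner_sub_right]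
  have h1 : |⟪y, φ⟫ - ⟪y, ψ⟫| ≤ ‖y‖ * ‖φ - ψ‖ := by
    rw [hab]; exact abs_real_inner_le_norm y (φ - ψ)
  have h2 : |⟪z, φ⟫ - ⟪z, ψ⟫| ≤ ‖z‖ * ‖φ - ψ‖ := by
    rw [hce]; exact abs_real_inner_le_norm z (φ - ψ)
  rw [abs_le] at ha hb hc h1 h2
  nlinarith [norm_nonneg y, norm_nonneg z, norm_nonneg (φ - ψ),
    mul_le_mul_of_nonneg_left h1.2 (norm_nonneg y)]

lemma norm_sub_le_arccos (d : ℕ) (φ ψ : EuclideanSpace ℝ (Fin d))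
    (hφ : ‖φ‖ = 1) (hψ : ‖ψ‖ = 1) : ‖φ - ψ‖ ≤ Real.arccos ⟪φ, ψ⟫ := by
  set θ := Real.arccos ⟪φ, ψ⟫ with hθ
  have hmem : ⟪φ, ψ⟫ ∈ Set.Icc (-1 : ℝ) 1 := by
    constructor
    · nlinarith [abs_real_inner_le_norm φ ψ, neg_abs_le ⟪φ, ψ⟫, hφ, hψ]
    · nlinarith [le_abs_self ⟪φ, ψ⟫, abs_real_inner_le_norm φ ψ]
  have hcos : Real.cos θ = ⟪φ, ψ⟫ := Real.cos_arccos hmem.1 hmem.2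
  have hθ0 : 0 ≤ θ := Real.arccos_nonneg _
  have hsq : ‖φ - ψ‖ ^ 2 = 2 - 2 * ⟪φ, ψ⟫ := by
    rw [norm_sub_sq_real, hφ, hψ]; ring
  have hcosge : 1 - θ ^ 2 / 2 ≤ Real.cos θ := Real.one_sub_sq_div_two_le_cos
  have : ‖φ - ψ‖ ^ 2 ≤ θ ^ 2 := by rw [hsq, ← hcos]; nlinarith
  nlinarith [norm_nonneg (φ - ψ)]

theorem stmt_11 (d : ℕ) (φ ψ y z y' z' : EuclideanSpace ℝ (Fin d))
    (hφ : ‖φ‖ = 1) (hψ : ‖ψ‖ = 1) :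
    (⟪y, φ⟫ ^ 2 - ⟪y, φ⟫ * ⟪z, φ⟫) - (⟪y, ψ⟫ ^ 2 - ⟪y, ψ⟫ * ⟪z, ψ⟫)
        - (⟪y', φ⟫ ^ 2 - ⟪y', φ⟫ * ⟪z', φ⟫) + (⟪y', ψ⟫ ^ 2 - ⟪y', ψ⟫ * ⟪z', ψ⟫) ≤
      2 * (‖y‖ ^ 2 + ‖y'‖ ^ 2 + ‖y‖ * ‖z‖ + ‖y'‖ * ‖z'‖) * Real.arccos ⟪φ, ψ⟫ := by
  have h1 := aux_lip d φ ψ y z hφ hψ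
  have h2 := aux_lip d ψ φ y' z' hψ hφ
  have hsymm : ⟪ψ, φ⟫ = ⟪φ, ψ⟫ := real_inner_comm φ ψ
  have hnorm : ‖ψ - φ‖ = ‖φ - ψ‖ := norm_sub_rev ψ φ
  rw [hnorm] at h2
  have harc := norm_sub_le_arccos d φ ψ hφ hψ
  have hC : (0 : ℝ) ≤ 2 * ‖y‖ ^ 2 + 2 * ‖y‖ * ‖z‖ := by positivity
  have hC' : (0 : ℝ) ≤ 2 * ‖y'‖ ^ 2 + 2 * ‖y'‖ * ‖z'‖ := by positivity
  nlinarith [mul_le_mul_of_nonneg_left harc hC, mul_le_mul_of_nonneg_left harc hC']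
end

section
/- For probability measures φ₀, φ₁, ψ₀, ψ₁ on a bounded set Ω ⊂ R^d with φ₀, φ₁ absolutely continuous, the half-squared Wasserstein-2 cost satisfies the quadruple inequality ½W₂²(φ₀,ψ₀) − ½W₂²(φ₁,ψ₀) + ½W₂²(φ₁,ψ₁) − ½W₂²(φ₀,ψ₁) ≤ 4·diam(Ω)² · ‖φ₀ − φ₁‖₁. -/
open MeasureTheory

/-- The squared 2-Wasserstein distance, defined as the infimum over couplings of the
integral of the squared distance. -/
noncomputable def W2sq {d : ℕ} (φ ψ : Measure (EuclideanSpace ℝ (Fin d))) : ℝ :=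
  sInf {r : ℝ |
    ∃ π : Measure (EuclideanSpace ℝ (Fin d) × EuclideanSpace ℝ (Fin d)),
      π.map Prod.fst = φ ∧ π.map Prod.snd = ψ ∧ r = ∫ p, dist p.1 p.2 ^ 2 ∂π}

namespace W2sqAux

open scoped ENNReal

variable {d : ℕ}

local notation "X" => EuclideanSpace ℝ (Fin d)

/-- The set of coupling costs. -/
def Wset (φ ψ : Measure X) : Set ℝ :=
  {r : ℝ |
    ∃ π : Measure (X × X),
      π.map Prod.fst = φ ∧ π.map Prod.snd = ψ ∧ r = ∫ p, dist p.1 p.2 ^ 2 ∂π}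

lemma W2sq_eq (φ ψ : Measure X) : W2sq φ ψ = sInf (Wset φ ψ) := rfl

lemma Wset_bddBelow (φ ψ : Measure X) : BddBelow (Wset φ ψ) := by
  refine ⟨0, fun r hr => ?_⟩
  obtain ⟨π, -, -, hr⟩ := hr
  rw [hr]
  exact integral_nonneg fun p => sq_nonneg _

lemma map_withDensity_comp {α β : Type*} [MeasurableSpace α] [MeasurableSpace β]
    (π : Measure α) (F : α → β) (hF : Measurable F) (g : β → ℝ≥0∞) (hg : Measurable g) :
    (π.withDensity (fun a => g (F a))).map F = (π.map F).withDensity g := by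
  ext A hA
  rw [Measure.map_apply hF hA, withDensity_apply _ hA, withDensity_apply _ (hF hA),
    setLIntegral_map hA hg hF]

lemma cost_bound (Ω : Set X) (hΩ : Bornology.IsBounded Ω) (hmeas : MeasurableSet Ω)
    (π : Measure (X × X)) [IsFiniteMeasure π]
    (h1 : π.map Prod.fst Ωᶜ = 0) (h2 : π.map Prod.snd Ωᶜ = 0) :
    Integrable (fun p : X × X => dist p.1 p.2 ^ 2) π ∧
      ∫ p, dist p.1 p.2 ^ 2 ∂π ≤ Metric.diam Ω ^ 2 * (π Set.univ).toReal := by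
  have hc : Continuous (fun p : X × X => dist p.1 p.2 ^ 2) :=
    (continuous_fst.dist continuous_snd).pow 2
  have hm1 : π (Prod.fst ⁻¹' Ωᶜ) = 0 := by
    rw [← Measure.map_apply measurable_fst hmeas.compl]; exact h1
  have hm2 : π (Prod.snd ⁻¹' Ωᶜ) = 0 := by
    rw [← Measure.map_apply measurable_snd hmeas.compl]; exact h2
  have a1 : ∀ᵐ p ∂π, p.1 ∈ Ω := by
    rw [ae_iff]; convert hm1 using 2; rfl
  have a2 : ∀ᵐ p ∂π, p.2 ∈ Ω := by
    rw [ae_iff]; convert hm2 using 2; rfl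
  have hae : ∀ᵐ p ∂π, dist p.1 p.2 ^ 2 ≤ Metric.diam Ω ^ 2 := by
    filter_upwards [a1, a2] with p hp1 hp2
    exact pow_le_pow_left₀ dist_nonneg (Metric.dist_le_diam_of_mem hΩ hp1 hp2) 2
  have hint : Integrable (fun p : X × X => dist p.1 p.2 ^ 2) π := by
    refine Integrable.mono' (integrable_const (Metric.diam Ω ^ 2)) hc.aestronglyMeasurable ?_
    filter_upwards [hae] with p hp
    rwa [Real.norm_eq_abs, abs_of_nonneg (sq_nonneg _)]
  refine ⟨hint, ?_⟩
  calc ∫ p, dist p.1 p.2 ^ 2 ∂π ≤ ∫ _p, Metric.diam Ω ^ 2 ∂π :=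
        integral_mono_ae hint (integrable_const _) hae
    _ = Metric.diam Ω ^ 2 * (π Set.univ).toReal := by
        rw [integral_const, smul_eq_mul, mul_comm]; rfl

set_option maxHeartbeats 2000000 in
lemma transfer (Ω : Set X) (hΩ : Bornology.IsBounded Ω) (hmeas : MeasurableSet Ω)
    (φ₀ φ₁ ψ : Measure X)
    [IsProbabilityMeasure φ₀] [IsProbabilityMeasure φ₁] [IsProbabilityMeasure ψ]
    (hψ : ψ Ωᶜ = 0)
    (f₀ f₁ : X → ℝ)
    (hf₀nn : ∀ x, 0 ≤ f₀ x) (hf₁nn : ∀ x, 0 ≤ f₁ x)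
    (hf₀ : φ₀ = (volume.restrict Ω).withDensity fun x => ENNReal.ofReal (f₀ x))
    (hf₁ : φ₁ = (volume.restrict Ω).withDensity fun x => ENNReal.ofReal (f₁ x))
    (hint : IntegrableOn (fun x => |f₀ x - f₁ x|) Ω volume) :
    W2sq φ₀ ψ ≤ W2sq φ₁ ψ + Metric.diam Ω ^ 2 * ∫ x in Ω, |f₀ x - f₁ x| := by
  set base : Measure X := volume.restrict Ω with hbase
  set I : ℝ := ∫ x in Ω, |f₀ x - f₁ x| with hIdef
  set D : ℝ := Metric.diam Ω ^ 2 with hDdef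
  have hD0 : 0 ≤ D := sq_nonneg _
  have hI0 : 0 ≤ I := integral_nonneg fun x => abs_nonneg _
  have hDI0 : 0 ≤ D * I := mul_nonneg hD0 hI0
  have hbaseΩc : base Ωᶜ = 0 := by
    rw [hbase, Measure.restrict_apply hmeas.compl]
    simp
  have hbWD : ∀ f : X → ℝ≥0∞, base.withDensity f Ωᶜ = 0 := fun f => by
    rw [withDensity_apply _ hmeas.compl, Measure.restrict_eq_zero.mpr hbaseΩc,
      lintegral_zero_measure]
  have hac : ∀ f : X → ℝ≥0∞, base.withDensity f ≪ base := fun f => by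
    refine Measure.AbsolutelyContinuous.mk fun A hA h0 => ?_
    rw [withDensity_apply _ hA, Measure.restrict_eq_zero.mpr h0, lintegral_zero_measure]
  have hac₀ : φ₀ ≪ base := hf₀ ▸ hac _
  have hac₁ : φ₁ ≪ base := hf₁ ▸ hac _
  set h₀ : X → ℝ≥0∞ := φ₀.rnDeriv base with hh₀
  set h₁ : X → ℝ≥0∞ := φ₁.rnDeriv base with hh₁
  have hm₀ : Measurable h₀ := Measure.measurable_rnDeriv _ _
  have hm₁ : Measurable h₁ := Measure.measurable_rnDeriv _ _
  have hd₀ : base.withDensity h₀ = φ₀ := Measure.withDensity_rnDeriv_eq _ _ hac₀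
  have hd₁ : base.withDensity h₁ = φ₁ := Measure.withDensity_rnDeriv_eq _ _ hac₁
  set q : X → ℝ≥0∞ := fun x => min (h₀ x) (h₁ x) with hq
  have hmq : Measurable q := hm₀.min hm₁
  set μ' : Measure X := base.withDensity q with hμ'
  set ρ₀ : Measure X := base.withDensity (fun x => h₀ x - q x) with hρ₀
  have hsplit₀ : μ' + ρ₀ = φ₀ := by
    have hfun : (q + fun x => h₀ x - q x) = h₀ :=
      funext fun x => by
        show q x + (h₀ x - q x) = h₀ x
        exact add_tsub_cancel_of_le (min_le_left _ _)
    have h := withDensity_add_left (μ := base) (f := q) hmq (fun x => h₀ x - q x)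
    rw [hμ', hρ₀, ← h, hfun, hd₀]
  have hμ'Ωc : μ' Ωᶜ = 0 := hbWD _
  have hρ₀Ωc : ρ₀ Ωᶜ = 0 := hbWD _
  have hφ₀Ωc : φ₀ Ωᶜ = 0 := hf₀ ▸ hbWD _
  have hφ₁Ωc : φ₁ Ωᶜ = 0 := hf₁ ▸ hbWD _
  have hμ'u_le : μ' Set.univ ≤ 1 := by
    calc μ' Set.univ ≤ (μ' + ρ₀) Set.univ := Measure.le_add_right le_rfl Set.univ
      _ = 1 := by rw [hsplit₀]; exact measure_univ
  have hμ'u_fin : μ' Set.univ ≠ ⊤ := (lt_of_le_of_lt hμ'u_le ENNReal.one_lt_top).ne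
  have hsplit₀u : μ' Set.univ + ρ₀ Set.univ = 1 := by
    have := congrArg (fun m : Measure X => m Set.univ) hsplit₀
    simpa [Measure.add_apply] using this
  have hρ₀univ : ρ₀ Set.univ = 1 - μ' Set.univ :=
    ENNReal.eq_sub_of_add_eq hμ'u_fin (by rw [add_comm]; exact hsplit₀u)
  -- mass bound
  have hintb : Integrable (fun x => |f₀ x - f₁ x|) base := hint
  have hlib : ∫⁻ x, ENNReal.ofReal (|f₀ x - f₁ x|) ∂base = ENNReal.ofReal I := by
    rw [hIdef, ← ofReal_integral_eq_lintegral_ofReal hintb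
      (Filter.Eventually.of_forall fun x => abs_nonneg _)]
  set A : Set X := {x | h₁ x < h₀ x} with hAdef
  have hA : MeasurableSet A := measurableSet_lt hm₁ hm₀
  have hρ₀u2 : ρ₀ Set.univ = ∫⁻ x in A, (h₀ x - h₁ x) ∂base := by
    rw [hρ₀, withDensity_apply _ MeasurableSet.univ, Measure.restrict_univ,
      ← lintegral_indicator hA]
    refine lintegral_congr fun x => ?_
    by_cases hx : x ∈ A
    · rw [Set.indicator_of_mem hx]
      have hlt : h₁ x < h₀ x := hx
      show h₀ x - min (h₀ x) (h₁ x) = h₀ x - h₁ x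
      rw [min_eq_right hlt.le]
    · rw [Set.indicator_of_notMem hx]
      have hle : h₀ x ≤ h₁ x := not_lt.mp hx
      show h₀ x - min (h₀ x) (h₁ x) = 0
      rw [min_eq_left hle, tsub_self]
  have hfinA : ∫⁻ x in A, h₁ x ∂base ≠ ⊤ := by
    refine (lt_of_le_of_lt (setLIntegral_le_lintegral _ _) ?_).ne
    exact Measure.lintegral_rnDeriv_lt_top φ₁ base
  have hsubA : ∫⁻ x in A, (h₀ x - h₁ x) ∂base = φ₀ A - φ₁ A := by
    rw [lintegral_sub hm₁ hfinA (ae_restrict_of_forall_mem hA fun x hx => (le_of_lt hx))]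
    rw [← hd₀, ← hd₁, withDensity_apply _ hA, withDensity_apply _ hA]
  have hcmp : φ₀ A ≤ φ₁ A + ENNReal.ofReal I := by
    have hAm : AEMeasurable (fun x => ENNReal.ofReal (|f₀ x - f₁ x|)) (base.restrict A) :=
      (ENNReal.measurable_ofReal.comp_aemeasurable
        hintb.aestronglyMeasurable.aemeasurable).restrict
    have pt : ∀ x, ENNReal.ofReal (f₀ x) ≤
        ENNReal.ofReal (f₁ x) + ENNReal.ofReal (|f₀ x - f₁ x|) := by
      intro x
      rw [← ENNReal.ofReal_add (hf₁nn _) (abs_nonneg _)]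
      refine ENNReal.ofReal_le_ofReal ?_
      have := le_abs_self (f₀ x - f₁ x)
      linarith
    calc φ₀ A = ∫⁻ x in A, ENNReal.ofReal (f₀ x) ∂base := by
          rw [hf₀, withDensity_apply _ hA]
      _ ≤ ∫⁻ x in A, (ENNReal.ofReal (f₁ x) + ENNReal.ofReal (|f₀ x - f₁ x|)) ∂base :=
          lintegral_mono fun x => pt x
      _ = (∫⁻ x in A, ENNReal.ofReal (f₁ x) ∂base)
          + ∫⁻ x in A, ENNReal.ofReal (|f₀ x - f₁ x|) ∂base := lintegral_add_right' _ hAm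
      _ ≤ φ₁ A + ENNReal.ofReal I := by
          refine add_le_add (le_of_eq ?_) ?_
          · rw [hf₁, withDensity_apply _ hA]
          · rw [← hlib]; exact setLIntegral_le_lintegral _ _
  have hρ₀I : ρ₀ Set.univ ≤ ENNReal.ofReal I := by
    rw [hρ₀u2, hsubA]
    exact tsub_le_iff_right.mpr (by rwa [add_comm])
  -- main per-coupling construction
  have key : ∀ r ∈ Wset φ₁ ψ, W2sq φ₀ ψ ≤ r + D * I := by
    rintro r ⟨π₁, hπf, hπs, hr⟩
    haveI : IsProbabilityMeasure π₁ := by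
      constructor
      have : π₁.map Prod.fst Set.univ = 1 := by rw [hπf]; exact measure_univ
      rwa [Measure.map_apply measurable_fst MeasurableSet.univ, Set.preimage_univ] at this
    set g : X → ℝ≥0∞ := fun x => q x / h₁ x with hgdef
    have hg : Measurable g := hmq.div hm₁
    have hg1 : ∀ x, g x ≤ 1 := fun x =>
      le_trans (ENNReal.div_le_div_right (min_le_right _ _) _) ENNReal.div_self_le_one
    set πμ : Measure (X × X) := π₁.withDensity (fun p => g p.1) with hπμ
    set πρ : Measure (X × X) := π₁.withDensity (fun p => 1 - g p.1) with hπρ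
    have hsum : πμ + πρ = π₁ := by
      have hfun : ((fun p : X × X => g p.1) + fun p => 1 - g p.1) = 1 :=
        funext fun p => by
          show g p.1 + (1 - g p.1) = 1
          exact add_tsub_cancel_of_le (hg1 p.1)
      have h := withDensity_add_left (μ := π₁) (f := fun p : X × X => g p.1)
        (hg.comp measurable_fst) (fun p : X × X => 1 - g p.1)
      rw [hπμ, hπρ, ← h, hfun, withDensity_one]
    have hπμ_fst : πμ.map Prod.fst = μ' := by
      rw [hπμ, map_withDensity_comp π₁ Prod.fst measurable_fst g hg, hπf, ← hd₁,
        ← withDensity_mul _ hm₁ hg]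
      refine withDensity_congr_ae ?_
      have hlt : ∀ᵐ x ∂base, h₁ x < ⊤ :=
        ae_lt_top hm₁ (Measure.lintegral_rnDeriv_lt_top φ₁ base).ne
      filter_upwards [hlt] with x hx
      by_cases h0 : h₁ x = 0
      · simp [hgdef, hq, h0]
      · exact ENNReal.mul_div_cancel h0 hx.ne
    have hπμ_le : πμ ≤ π₁ := hsum ▸ Measure.le_add_right le_rfl
    have hπρ_le : πρ ≤ π₁ := hsum ▸ Measure.le_add_left le_rfl
    have hπμu : πμ Set.univ = μ' Set.univ := by
      rw [← hπμ_fst, Measure.map_apply measurable_fst MeasurableSet.univ, Set.preimage_univ]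
    have hsumu : πμ Set.univ + πρ Set.univ = 1 := by
      have := congrArg (fun m : Measure (X × X) => m Set.univ) hsum
      simpa [Measure.add_apply] using this
    have hπρu : πρ Set.univ = 1 - μ' Set.univ := by
      rw [← hπμu]
      exact ENNReal.eq_sub_of_add_eq (by rw [hπμu]; exact hμ'u_fin)
        (by rw [add_comm]; exact hsumu)
    set νρ : Measure X := πρ.map Prod.snd with hνρ
    have hνρu : νρ Set.univ = 1 - μ' Set.univ := by
      rw [hνρ, Measure.map_apply measurable_snd MeasurableSet.univ, Set.preimage_univ, hπρu]
    set ε : ℝ≥0∞ := 1 - μ' Set.univ with hεdef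
    have hε_le : ε ≤ 1 := tsub_le_self
    have hε_fin : ε ≠ ⊤ := (lt_of_le_of_lt hε_le ENNReal.one_lt_top).ne
    have hρ₀ε : ρ₀ Set.univ = ε := hρ₀univ
    haveI : IsFiniteMeasure ρ₀ :=
      ⟨by rw [hρ₀ε]; exact lt_of_le_of_lt hε_le ENNReal.one_lt_top⟩
    haveI : IsFiniteMeasure νρ :=
      ⟨by rw [hνρu]; exact lt_of_le_of_lt tsub_le_self ENNReal.one_lt_top⟩
    have hsnd : πμ.map Prod.snd + νρ = ψ := by
      rw [hνρ, ← Measure.map_add _ _ measurable_snd, hsum, hπs]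
    have hνμ_le : πμ.map Prod.snd ≤ ψ := hsnd ▸ Measure.le_add_right le_rfl
    have hνρ_le : νρ ≤ ψ := hsnd ▸ Measure.le_add_left le_rfl
    have hνρΩc : νρ Ωᶜ = 0 := le_antisymm (le_trans (hνρ_le Ωᶜ) hψ.le) zero_le
    -- integrability over π₁
    have hπ₁c := cost_bound Ω hΩ hmeas π₁ (by rw [hπf]; exact hφ₁Ωc) (by rw [hπs]; exact hψ)
    have hcostπμ : ∫ p, dist p.1 p.2 ^ 2 ∂πμ ≤ r := by
      rw [hr]
      exact integral_mono_measure hπμ_le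
        (Filter.Eventually.of_forall fun p => sq_nonneg _) hπ₁c.1
    rcases eq_or_ne ε 0 with hε0 | hε0
    · -- degenerate case : π₁ itself couples (φ₀, ψ)
      have hρ₀0 : ρ₀ = 0 := Measure.measure_univ_eq_zero.mp (by rw [hρ₀ε, hε0])
      have hπρ0 : πρ = 0 := Measure.measure_univ_eq_zero.mp (by rw [hπρu]; exact hε0)
      have hπ₁f : π₁.map Prod.fst = φ₀ := by
        rw [← hsum, hπρ0, add_zero, hπμ_fst, ← hsplit₀, hρ₀0, add_zero]
      refine le_trans (csInf_le (Wset_bddBelow _ _) ⟨π₁, hπ₁f, hπs, hr⟩) ?_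
      linarith
    · set κ : Measure (X × X) := ρ₀.prod νρ with hκ
      set π₀ : Measure (X × X) := πμ + ε⁻¹ • κ with hπ₀
      have hνρu' : νρ Set.univ = ε := hνρu
      have hinv : ε⁻¹ * ε = 1 := ENNReal.inv_mul_cancel hε0 hε_fin
      have hπ₀f : π₀.map Prod.fst = φ₀ := by
        rw [hπ₀, Measure.map_add _ _ measurable_fst, Measure.map_smul, hπμ_fst, hκ,
          Measure.map_fst_prod, hνρu', smul_smul, hinv, one_smul, hsplit₀]
      have hπ₀s : π₀.map Prod.snd = ψ := by
        rw [hπ₀, Measure.map_add _ _ measurable_snd, Measure.map_smul, hκ,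
          Measure.map_snd_prod, hρ₀ε, smul_smul, hinv, one_smul, hsnd]
      have hκf : κ.map Prod.fst Ωᶜ = 0 := by
        rw [hκ, Measure.map_fst_prod]
        simp [hρ₀Ωc]
      have hκs : κ.map Prod.snd Ωᶜ = 0 := by
        rw [hκ, Measure.map_snd_prod]
        simp [hνρΩc]
      have hκc := cost_bound Ω hΩ hmeas κ hκf hκs
      have hκu : κ Set.univ = ε * ε := by
        rw [hκ, ← Set.univ_prod_univ, Measure.prod_prod, hρ₀ε, hνρu']
      have hεtR : ε.toReal ≤ I := by
        have := hρ₀I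
        rw [hρ₀ε] at this
        exact ENNReal.toReal_le_of_le_ofReal hI0 this
      have hεt0 : ε.toReal ≠ 0 := ENNReal.toReal_ne_zero.mpr ⟨hε0, hε_fin⟩
      have hεtnn : 0 ≤ ε.toReal := ENNReal.toReal_nonneg
      have hcostκ : ∫ p, dist p.1 p.2 ^ 2 ∂(ε⁻¹ • κ) ≤ D * ε.toReal := by
        rw [integral_smul_measure, smul_eq_mul, ENNReal.toReal_inv]
        calc ε.toReal⁻¹ * ∫ p, dist p.1 p.2 ^ 2 ∂κ
            ≤ ε.toReal⁻¹ * (D * (κ Set.univ).toReal) := by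
              refine mul_le_mul_of_nonneg_left hκc.2 (by positivity)
          _ = D * ε.toReal := by
              rw [hκu, ENNReal.toReal_mul]
              field_simp
      have hintπμ : Integrable (fun p : X × X => dist p.1 p.2 ^ 2) πμ :=
        hπ₁c.1.mono_measure hπμ_le
      have hintsm : Integrable (fun p : X × X => dist p.1 p.2 ^ 2) (ε⁻¹ • κ) :=
        hκc.1.smul_measure (ENNReal.inv_ne_top.mpr hε0)
      have hcostπ₀ : ∫ p, dist p.1 p.2 ^ 2 ∂π₀ ≤ r + D * I := by
        rw [hπ₀, integral_add_measure hintπμ hintsm]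
        have : D * ε.toReal ≤ D * I := mul_le_mul_of_nonneg_left hεtR hD0
        linarith
      exact le_trans (csInf_le (Wset_bddBelow _ _) ⟨π₀, hπ₀f, hπ₀s, rfl⟩) hcostπ₀
  -- conclude
  have hS₁ne : (Wset φ₁ ψ).Nonempty := by
    refine ⟨∫ p, dist p.1 p.2 ^ 2 ∂(φ₁.prod ψ), φ₁.prod ψ, ?_, ?_, rfl⟩
    · rw [Measure.map_fst_prod]; simp
    · rw [Measure.map_snd_prod]; simp
  have : W2sq φ₀ ψ - D * I ≤ sInf (Wset φ₁ ψ) :=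
    le_csInf hS₁ne fun r hr => sub_le_iff_le_add.mpr (key r hr)
  rw [← W2sq_eq] at this
  linarith

end W2sqAux

theorem stmt_14 (d : ℕ) (Ω : Set (EuclideanSpace ℝ (Fin d)))
    (hΩ : Bornology.IsBounded Ω) (hmeas : MeasurableSet Ω)
    (φ₀ φ₁ ψ₀ ψ₁ : Measure (EuclideanSpace ℝ (Fin d)))
    [IsProbabilityMeasure φ₀] [IsProbabilityMeasure φ₁]
    [IsProbabilityMeasure ψ₀] [IsProbabilityMeasure ψ₁]
    (hψ₀ : ψ₀ Ωᶜ = 0) (hψ₁ : ψ₁ Ωᶜ = 0)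
    (f₀ f₁ : EuclideanSpace ℝ (Fin d) → ℝ)
    (hf₀nn : ∀ x, 0 ≤ f₀ x) (hf₁nn : ∀ x, 0 ≤ f₁ x)
    (hf₀ : φ₀ = (volume.restrict Ω).withDensity fun x => ENNReal.ofReal (f₀ x))
    (hf₁ : φ₁ = (volume.restrict Ω).withDensity fun x => ENNReal.ofReal (f₁ x))
    (hint : IntegrableOn (fun x => |f₀ x - f₁ x|) Ω volume) :
    W2sq φ₀ ψ₀ / 2 - W2sq φ₁ ψ₀ / 2 + W2sq φ₁ ψ₁ / 2 - W2sq φ₀ ψ₁ / 2 ≤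
      4 * Metric.diam Ω ^ 2 * ∫ x in Ω, |f₀ x - f₁ x| := by
  have habs : (fun x => |f₁ x - f₀ x|) = fun x => |f₀ x - f₁ x| :=
    funext fun x => abs_sub_comm _ _
  have hint' : IntegrableOn (fun x => |f₁ x - f₀ x|) Ω volume := by rwa [habs]
  have T1 := W2sqAux.transfer Ω hΩ hmeas φ₀ φ₁ ψ₀ hψ₀ f₀ f₁ hf₀nn hf₁nn hf₀ hf₁ hint
  have T2 := W2sqAux.transfer Ω hΩ hmeas φ₁ φ₀ ψ₁ hψ₁ f₁ f₀ hf₁nn hf₀nn hf₁ hf₀ hint'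
  rw [habs] at T2
  have hI0 : 0 ≤ ∫ x in Ω, |f₀ x - f₁ x| := integral_nonneg fun x => abs_nonneg _
  have hD0 : (0:ℝ) ≤ Metric.diam Ω ^ 2 := sq_nonneg _
  nlinarith [mul_nonneg hD0 hI0]
end

section
/- Let Ĵ and J̃ be empirical risks built from samples X = (X₁,...,Xₙ) and X' = (Y, X₂,...,Xₙ) respectively, with the same regularizer R. If φ̂ minimizes Ĵ and φ̃ minimizes J̃ and the quadruple inequality l(φ,x) − l(ψ,x) − l(φ,y) + l(ψ,y) ≤ a(x,y)·ϑ(φ,ψ)^α holds, and Ĵ satisfies the error bound (τ/2)·ϑ(φ̃, Ŝ)^β ≤ Ĵ(φ̃) − Ĵ_*, then ϑ(φ̃, Ŝ)^{β−α} ≤ (2/(τn))·a(X₁, Y). -/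
open Metric

theorem stmt_16 {M 𝕏 : Type*} [MetricSpace M]
    (l : M → 𝕏 → ℝ) (R : M → ℝ) (n : ℕ) (hn : 0 < n)
    (x : Fin n → 𝕏) (y : 𝕏)
    (α β τ : ℝ) (hα : 0 < α) (hαβ : α < β) (hτ : 0 < τ)
    (a : 𝕏 → 𝕏 → ℝ) (hanneg : ∀ w z, 0 ≤ a w z)
    (Jhat : M → ℝ) (hJhat : Jhat = fun φ => ((1 : ℝ) / n) * ∑ i, l φ (x i) + R φ)
    (Jtil : M → ℝ)
    (hJtil : Jtil = fun φ => ((1 : ℝ) / n) * ∑ i, l φ (Function.update x ⟨0, hn⟩ y i) + R φ)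
    (Shat : Set M) (hShat : Shat = {φ | ∀ ψ, Jhat φ ≤ Jhat ψ})
    (φhat : M) (hφhat : φhat ∈ Shat)
    (φtil : M) (hφtil : ∀ ψ, Jtil φtil ≤ Jtil ψ)
    (hquad : ∀ φ ψ : M, ∀ w z : 𝕏,
      l φ w - l ψ w - l φ z + l ψ z ≤ a w z * dist φ ψ ^ α)
    (herr : τ / 2 * infDist φtil Shat ^ β ≤ Jhat φtil - Jhat φhat) :
    infDist φtil Shat ^ (β - α) ≤ (2 / (τ * n)) * a (x ⟨0, hn⟩) y := by
  set i0 : Fin n := ⟨0, hn⟩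
  set A : ℝ := a (x i0) y with hA
  set d : ℝ := infDist φtil Shat with hdd
  have hd0 : 0 ≤ d := infDist_nonneg
  have hne : Shat.Nonempty := ⟨φhat, hφhat⟩
  have hnpos : (0:ℝ) < n := by exact_mod_cast hn
  have hsum : ∀ φ : M, ∑ i, l φ (Function.update x i0 y i)
      = ∑ i, l φ (x i) - l φ (x i0) + l φ y := by
    intro φ
    have h1 : (fun i => l φ (Function.update x i0 y i))
        = Function.update (fun i => l φ (x i)) i0 (l φ y) := by
      funext i
      exact Function.apply_update (fun _ t => l φ t) x i0 y i
    rw [h1, Finset.sum_update_of_mem (Finset.mem_univ i0)]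
    have h2 : ∑ i, l φ (x i)
        = l φ (x i0) + ∑ i ∈ Finset.univ \ {i0}, l φ (x i) := by
      rw [Finset.sum_eq_add_sum_sdiff_singleton_of_mem (Finset.mem_univ i0)]
    linarith
  have hdiff : ∀ φ : M, Jhat φ = Jtil φ + (1 / n) * (l φ (x i0) - l φ y) := by
    intro φ
    simp only [hJhat, hJtil, hsum φ]
    ring
  have key : ∀ ψ ∈ Shat, τ / 2 * d ^ β ≤ (1 / n) * (A * dist φtil ψ ^ α) := by
    intro ψ hψ
    rw [hShat] at hψ
    have h1 : Jhat ψ ≤ Jhat φhat := hψ φhat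
    have h2 : Jtil φtil ≤ Jtil ψ := hφtil ψ
    have h3 := hquad φtil ψ (x i0) y
    have h4 : (0:ℝ) ≤ 1 / n := by positivity
    have h5 := mul_le_mul_of_nonneg_left h3 h4
    have h6 := hdiff φtil
    have h7 := hdiff ψ
    nlinarith [herr]
  have key2 : τ / 2 * d ^ β ≤ (1 / n) * (A * d ^ α) := by
    have hc : ContinuousAt (fun t : ℝ => (1 / (n:ℝ)) * (A * t ^ α)) d := by
      have h := Real.continuousAt_rpow_const d α (Or.inr hα.le)
      exact continuousAt_const.mul (continuousAt_const.mul h)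
    have hadd : Filter.Tendsto (fun ε : ℝ => d + ε) (nhdsWithin 0 (Set.Ioi 0)) (nhds d) := by
      have h : Filter.Tendsto (fun ε : ℝ => d + ε) (nhds 0) (nhds d) := by
        have hcont : Continuous fun ε : ℝ => d + ε := continuous_const.add continuous_id
        simpa using hcont.tendsto 0
      exact h.mono_left nhdsWithin_le_nhds
    have ht := (hc.tendsto.comp hadd)
    refine ge_of_tendsto ht ?_
    filter_upwards [self_mem_nhdsWithin] with ε (hε : 0 < ε)
    simp only [Function.comp]
    obtain ⟨ψ, hψ, hdist⟩ := (infDist_lt_iff hne).mp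
      (by linarith : infDist φtil Shat < d + ε)
    calc τ / 2 * d ^ β ≤ (1 / n) * (A * dist φtil ψ ^ α) := key ψ hψ
      _ ≤ (1 / n) * (A * (d + ε) ^ α) := by
          apply mul_le_mul_of_nonneg_left _ (by positivity)
          apply mul_le_mul_of_nonneg_left _ (hanneg _ _)
          exact Real.rpow_le_rpow dist_nonneg hdist.le hα.le
  rcases eq_or_lt_of_le hd0 with h | hd
  · rw [← h, Real.zero_rpow (by linarith : β - α ≠ 0)]
    exact mul_nonneg (by positivity) (hanneg _ _)
  · rw [Real.rpow_sub hd, div_le_iff₀ (Real.rpow_pos_of_pos hd α)]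
    have h2τ : (0:ℝ) ≤ 2 / τ := by positivity
    have := mul_le_mul_of_nonneg_left key2 h2τ
    calc d ^ β = (2 / τ) * (τ / 2 * d ^ β) := by field_simp
      _ ≤ (2 / τ) * ((1 / n) * (A * d ^ α)) := this
      _ = 2 / (τ * n) * A * d ^ α := by field_simp
end
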